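/- Let B be the ℤ²-indexed algebra associated to the free algebra k⟨x, y⟩ graded by deg(x) = (1,0), deg(y) = (0,1), with ℤ² given the product order. Then the tail e_{(0,0)}B_{>(1,1)} is not a finitely generated right B-module; in particular the elements x²y, x³y, x⁴y, … are pairwise right linearly independent elements of e_{(0,0)}B_{>(1,1)}. -/

import Mathlib

open MonoidAlgebra

/-- The multidegree of a word in the free monoid on `x = 0`, `y = 1`. -/
def wordDeg (w : FreeMonoid (Fin 2)) : ℤ × ℤ :=
  ((w.toList.count 0 : ℤ), (w.toList.count 1 : ℤ))

/-- The part of the free algebra `k⟨x,y⟩` corresponding to the tail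
`e_{(0,0)}B_{>(1,1)}` of the associated `ℤ²`-indexed algebra `B = B_{ℤ²}(k⟨x,y⟩)`:
sums of homogeneous components of multidegree strictly greater than `(1,1)` in the
product order. -/
def tailSet (k : Type*) [Field k] : Set (MonoidAlgebra k (FreeMonoid (Fin 2))) :=
  {a | ∀ w ∈ a.coeff.support, ((1 : ℤ), (1 : ℤ)) < wordDeg w}

/-! ### Auxiliary material -/

/-- The word `x^n y` in the free monoid. -/
def theWord (n : ℕ) : FreeMonoid (Fin 2) := FreeMonoid.of 0 ^ n * FreeMonoid.of 1

lemma toList_pow_of (n : ℕ) :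
    ((FreeMonoid.of (0 : Fin 2)) ^ n).toList = List.replicate n 0 := by
  induction n with
  | zero => rfl
  | succ n ih =>
    rw [pow_succ, FreeMonoid.toList_mul, ih, FreeMonoid.toList_of,
      ← List.replicate_succ']

lemma toList_theWord (n : ℕ) :
    (theWord n).toList = List.replicate n 0 ++ [1] := by
  rw [theWord, FreeMonoid.toList_mul, toList_pow_of, FreeMonoid.toList_of]

lemma X_eq (k : Type*) [Field k] (n : ℕ) :
    (MonoidAlgebra.of k (FreeMonoid (Fin 2)) (FreeMonoid.of 0)) ^ n *
      MonoidAlgebra.of k (FreeMonoid (Fin 2)) (FreeMonoid.of 1) =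
      MonoidAlgebra.single (theWord n) 1 := by
  rw [MonoidAlgebra.of_apply, MonoidAlgebra.of_apply, MonoidAlgebra.single_pow,
    MonoidAlgebra.single_mul_single, one_pow, one_mul, theWord]

lemma coeff_single_mul {k : Type*} [Field k] (w u : FreeMonoid (Fin 2))
    (a : MonoidAlgebra k (FreeMonoid (Fin 2))) :
    (MonoidAlgebra.single w (1 : k) * a).coeff (w * u) = a.coeff u := by
  rw [MonoidAlgebra.coeff_single_mul_eq_mul_coeff u (fun c _ => mul_right_inj w), one_mul]

/-- No word of the form `x^(m+2) y u` equals a word `x^(m'+2) y v` when `m < m'`. -/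
lemma word_mul_ne {m m' : ℕ} (h : m < m') (u v : FreeMonoid (Fin 2)) :
    theWord (m + 2) * u ≠ theWord (m' + 2) * v := by
  intro he
  have hl := congrArg FreeMonoid.toList he
  rw [FreeMonoid.toList_mul, FreeMonoid.toList_mul, toList_theWord, toList_theWord,
    List.append_assoc, List.append_assoc] at hl
  have h1 : (List.replicate (m + 2) (0 : Fin 2) ++ ([1] ++ u.toList))[m + 2]? =
      some 1 := by
    rw [List.getElem?_append_right (by simp)]
    simp
  have h2 : (List.replicate (m' + 2) (0 : Fin 2) ++ ([1] ++ v.toList))[m + 2]? =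
      some 0 := by
    rw [List.getElem?_append, if_pos (by simp; omega), List.getElem?_replicate,
      if_pos (by omega)]
  rw [hl, h2] at h1
  exact absurd (Option.some.inj h1) (by decide)

/-- Right linear independence: the core cancellation step. -/
lemma indep_aux {k : Type*} [Field k] {m m' : ℕ} (h : m < m')
    (a b : MonoidAlgebra k (FreeMonoid (Fin 2)))
    (hab : MonoidAlgebra.single (theWord (m + 2)) (1 : k) * a +
      MonoidAlgebra.single (theWord (m' + 2)) (1 : k) * b = 0) : a = 0 := by
  classical
  ext u
  have h0 : (MonoidAlgebra.single (theWord (m + 2)) (1 : k) * a +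
      MonoidAlgebra.single (theWord (m' + 2)) (1 : k) * b).coeff (theWord (m + 2) * u) = 0 := by
    rw [hab]; rfl
  rw [MonoidAlgebra.coeff_add, Finsupp.add_apply, coeff_single_mul] at h0
  have h2 : (MonoidAlgebra.single (theWord (m' + 2)) (1 : k) * b).coeff (theWord (m + 2) * u)
      = 0 := by
    apply Finsupp.notMem_support_iff.mp
    intro hm
    obtain ⟨p, hp, q, _, hpq⟩ := Finset.mem_mul.mp (MonoidAlgebra.support_coeff_mul_subset _ _ hm)
    have hp' : p = theWord (m' + 2) :=
      Finset.mem_singleton.mp (Finsupp.support_single_subset hp)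
    subst hp'
    exact word_mul_ne h u q hpq.symm
  rw [h2, add_zero] at h0
  simpa using h0

lemma single_mul_eq_zero {k : Type*} [Field k] (w : FreeMonoid (Fin 2))
    (b : MonoidAlgebra k (FreeMonoid (Fin 2)))
    (h : MonoidAlgebra.single w (1 : k) * b = 0) : b = 0 := by
  ext u
  have := congrArg (fun f : MonoidAlgebra k (FreeMonoid (Fin 2)) => f.coeff (w * u)) h
  simpa [coeff_single_mul] using this

lemma single_word_mem_tail (k : Type*) [Field k] (m : ℕ) :
    (MonoidAlgebra.single (theWord (m + 2)) (1 : k)) ∈ tailSet k := by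
  intro w hw
  have hw' : w = theWord (m + 2) :=
    Finset.mem_singleton.mp (Finsupp.support_single_subset hw)
  subst hw'
  have hdeg : wordDeg (theWord (m + 2)) = ((m + 2 : ℤ), 1) := by
    simp [wordDeg, toList_theWord, List.count_replicate]
  rw [hdeg, Prod.mk_lt_mk]
  exact Or.inl ⟨by omega, le_refl _⟩

/-- A word whose product with something is `x^(n+2) y`, and which is short, has no `y`. -/
lemma count_one_prefix {p q : FreeMonoid (Fin 2)} {n : ℕ} (hlen : p.toList.length ≤ n)
    (h : p * q = theWord (n + 2)) : p.toList.count 1 = 0 := by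
  have hl := congrArg FreeMonoid.toList h
  rw [FreeMonoid.toList_mul, toList_theWord] at hl
  have hp : p.toList = ((List.replicate (n + 2) (0 : Fin 2) ++ [1]).take p.toList.length) := by
    rw [← hl, List.take_left]
  rw [hp, List.take_append_of_le_length (by simp; omega), List.take_replicate,
    List.count_replicate]
  simp

/-- For the free algebra `k⟨x,y⟩`, graded by `ℤ²` with `deg x = (1,0)`, `deg y = (0,1)`
and `ℤ²` carrying the product order, the tail `e_{(0,0)}B_{>(1,1)}` of the associated
`ℤ²`-indexed algebra is not finitely generated as a right module; in particular the
elements `x²y, x³y, x⁴y, …` all lie in this tail and are pairwise right linearly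
independent. -/
theorem freeAlgebra_tail_not_finitely_generated (k : Type*) [Field k] :
    (∀ m : ℕ,
      (MonoidAlgebra.of k (FreeMonoid (Fin 2)) (FreeMonoid.of 0)) ^ (m + 2) *
        MonoidAlgebra.of k (FreeMonoid (Fin 2)) (FreeMonoid.of 1) ∈ tailSet k) ∧
    (∀ m m' : ℕ, m ≠ m' →
      ∀ a b : MonoidAlgebra k (FreeMonoid (Fin 2)),
        (MonoidAlgebra.of k (FreeMonoid (Fin 2)) (FreeMonoid.of 0)) ^ (m + 2) *
            MonoidAlgebra.of k (FreeMonoid (Fin 2)) (FreeMonoid.of 1) * a +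
          (MonoidAlgebra.of k (FreeMonoid (Fin 2)) (FreeMonoid.of 0)) ^ (m' + 2) *
            MonoidAlgebra.of k (FreeMonoid (Fin 2)) (FreeMonoid.of 1) * b = 0 →
        a = 0 ∧ b = 0) ∧
    ¬ ∃ (n : ℕ) (g : Fin n → MonoidAlgebra k (FreeMonoid (Fin 2))),
        (∀ l, g l ∈ tailSet k) ∧
        ∀ x ∈ tailSet k, ∃ c : Fin n → MonoidAlgebra k (FreeMonoid (Fin 2)),
          x = ∑ l, g l * c l := by
  classical
  refine ⟨?_, ?_, ?_⟩
  · -- membership in the tail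
    intro m
    rw [X_eq]
    exact single_word_mem_tail k m
  · -- pairwise right linear independence
    intro m m' hne a b hab
    rw [X_eq, X_eq] at hab
    rcases hne.lt_or_gt with h | h
    · have ha : a = 0 := indep_aux h a b hab
      subst ha
      rw [mul_zero, zero_add] at hab
      exact ⟨rfl, single_mul_eq_zero _ b hab⟩
    · have hb : b = 0 := by
        refine indep_aux h b a ?_
        rw [add_comm]; exact hab
      subst hb
      rw [mul_zero, add_zero] at hab
      exact ⟨single_mul_eq_zero _ a hab, rfl⟩
  · -- not finitely generated
    rintro ⟨n, g, hg, hspan⟩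
    set N : ℕ := Finset.univ.sup fun l => ((g l).coeff.support.sup fun w => w.toList.length)
      with hN
    obtain ⟨c, hc⟩ := hspan (MonoidAlgebra.single (theWord (N + 2)) (1 : k))
      (single_word_mem_tail k N)
    have hzero : ∀ l : Fin n, theWord (N + 2) ∉ (g l * c l).coeff.support := by
      intro l hm
      obtain ⟨p, hp, q, _, hpq⟩ := Finset.mem_mul.mp (MonoidAlgebra.support_coeff_mul_subset _ _ hm)
      -- `p` has at least one `y`
      have hdeg := hg l p hp
      have hcount : 1 ≤ p.toList.count 1 := by
        have h2 : (1 : ℤ) ≤ (wordDeg p).2 := hdeg.le.2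
        simp only [wordDeg] at h2
        exact_mod_cast h2
      -- but `p` is short, hence a prefix of the `x`-block, hence has no `y`
      have hlen : p.toList.length ≤ N := by
        calc p.toList.length ≤ (g l).coeff.support.sup fun w => w.toList.length :=
              Finset.le_sup hp
          _ ≤ N := Finset.le_sup (f := fun l => ((g l).coeff.support.sup fun w => w.toList.length)) (Finset.mem_univ l)
      have := count_one_prefix hlen hpq
      omega
    have hnot : theWord (N + 2) ∉ (∑ l : Fin n, g l * c l).coeff.support := by
      intro hmem
      rw [MonoidAlgebra.coeff_sum] at hmem
      obtain ⟨l, _, hl⟩ := Finsupp.mem_support_finsetSum _ hmem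
      exact hzero l hl
    rw [← hc] at hnot
    exact hnot (by simp [Finsupp.mem_support_iff])
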